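/- Let p₀ be a polynomial vector of total degree d in x = (x₁,…,x_n), and let p₁,…,p_r be polynomial vectors of total degree at most 1. Then the set M of all monomials in x of total degree at most d is an input-free quadratization of the polynomial-bilinear system ẋ = p₀(x) + ∑ⱼ pⱼ(x)uⱼ: for every monomial m ∈ M, its derivative along solutions equals a polynomial of total degree at most two in the elements of M, with the inputs uⱼ appearing only linearly (multiplying at-most-quadratic expressions that are linear in M). -/
import Mathlib

open MvPolynomial

lemma aux_aeval_pair {S T : Type*} [DecidableEq S] (σ' : S → MvPolynomial T ℂ) (v w : S) (c : ℂ) :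
    aeval σ' (monomial (Finsupp.single v 1 + Finsupp.single w 1) c) = C c * (σ' v * σ' w) := by
  rw [aeval_monomial, Finsupp.prod_add_index (by simp) (by intros; rw [pow_add])]
  simp [Finsupp.prod_single_index, algebraMap_eq, mul_assoc]

lemma aux_rename_sum {S T : Type*} (f : S → T) (p : MvPolynomial S ℂ) :
    (rename f p : MvPolynomial T ℂ)
      = ∑ s ∈ p.support, C (coeff s p) * rename f (monomial s (1 : ℂ)) := by
  conv_lhs => rw [← p.support_sum_monomial_coeff]
  rw [map_sum]
  refine Finset.sum_congr rfl fun s _ => ?_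
  rw [show (monomial s) (coeff s p) = C (coeff s p) * monomial s 1 by rw [C_mul_monomial, mul_one],
    map_mul, rename_C]

lemma aux_pair_sum {S : Type*} [DecidableEq S] (v w : S) :
    ((Finsupp.single v 1 + Finsupp.single w 1).sum fun _ e => e) = 2 := by
  rw [Finsupp.sum_add_index' (fun _ => rfl) (fun _ _ _ => rfl),
    Finsupp.sum_single_index rfl, Finsupp.sum_single_index rfl]

/-- If `p₀` has total degree at most `d` and each `pⱼ` has total degree at most `1`, then
the set of all monomials of total degree at most `d` is an input-free quadratization of the
polynomial-bilinear system `ẋ = p₀(x) + ∑ⱼ pⱼ(x)uⱼ`: the Lie derivative of each such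
monomial is a polynomial of total degree at most two in these monomials, affine in the
inputs `u`. -/
theorem stmt8 (n r d : ℕ)
    (p0 : Fin n → MvPolynomial (Fin n) ℂ)
    (p : Fin r → Fin n → MvPolynomial (Fin n) ℂ)
    (hp0 : ∀ i, (p0 i).totalDegree ≤ d)
    (hp : ∀ j i, (p j i).totalDegree ≤ 1) :
    ∀ m : Fin n →₀ ℕ, (m.sum fun _ e => e) ≤ d →
      ∃ q : MvPolynomial ((Fin n →₀ ℕ) ⊕ Fin r) ℂ,
        q.totalDegree ≤ 2 ∧
        (∀ j : Fin r, q.degreeOf (Sum.inr j) ≤ 1) ∧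
        (∀ s : Fin n →₀ ℕ, Sum.inl s ∈ q.vars → (s.sum fun _ e => e) ≤ d) ∧
        aeval (Sum.elim
            (fun s : Fin n →₀ ℕ =>
              (rename Sum.inl (monomial s (1 : ℂ)) : MvPolynomial (Fin n ⊕ Fin r) ℂ))
            (fun j => X (Sum.inr j))) q =
          ∑ i : Fin n,
            (rename Sum.inl (p0 i) + ∑ j : Fin r, X (Sum.inr j) * rename Sum.inl (p j i)) *
              rename Sum.inl (pderiv i (monomial m (1 : ℂ))) := by
  intro m hm
  classical
  set V := (Fin n →₀ ℕ) ⊕ Fin r with hV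
  set mi : Fin n → (Fin n →₀ ℕ) := fun i => m - Finsupp.single i 1 with hmi
  set q : MvPolynomial V ℂ :=
    ∑ i : Fin n,
      ((∑ s ∈ (p0 i).support,
          monomial (Finsupp.single (Sum.inl s : V) 1 + Finsupp.single (Sum.inl (mi i)) 1)
            ((m i : ℂ) * coeff s (p0 i))) +
       ∑ j : Fin r, ∑ s ∈ (p j i).support,
          monomial (Finsupp.single (Sum.inr j : V) 1 + Finsupp.single (Sum.inl (s + mi i)) 1)
            ((m i : ℂ) * coeff s (p j i))) with hq
  -- degree facts about exponents
  have hdmi : ∀ i : Fin n, m i ≠ 0 → ((mi i).sum fun _ e => e) + 1 ≤ d := by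
    intro i h
    have hle : Finsupp.single i 1 ≤ m := by rw [Finsupp.single_le_iff]; omega
    have hc : (m - Finsupp.single i 1) + Finsupp.single i 1 = m := tsub_add_cancel_of_le hle
    calc ((mi i).sum fun _ e => e) + 1
        = ((m - Finsupp.single i 1) + Finsupp.single i 1).sum fun _ e => e := by
          rw [Finsupp.sum_add_index' (fun _ => rfl) (fun _ _ _ => rfl),
            Finsupp.sum_single_index rfl]
      _ ≤ d := by rw [hc]; exact hm
  have hdmi' : ∀ i : Fin n, ((mi i).sum fun _ e => e) ≤ d := by
    intro i
    rcases eq_or_ne (m i) 0 with h | h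
    · have : mi i = m := by
        ext k
        rcases eq_or_ne k i with rfl | hk
        · simp [hmi, h]
        · simp [hmi, Finsupp.single_apply, (Ne.symm hk : i ≠ k)]
      rw [this]; exact hm
    · exact Nat.le_of_succ_le (hdmi i h)
  -- key support fact
  have key : ∀ μ ∈ q.support, ((μ.sum fun _ e => e) ≤ 2 ∧ (∀ j : Fin r, μ (Sum.inr j) ≤ 1) ∧
      (∀ s : Fin n →₀ ℕ, μ (Sum.inl s) ≠ 0 → (s.sum fun _ e => e) ≤ d)) := by
    intro μ hμ
    obtain ⟨i, -, hμ⟩ := Finset.mem_biUnion.1 (support_sum hμ)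
    rcases Finset.mem_union.1 (Finsupp.support_add hμ) with hμ | hμ
    · -- drift part
      obtain ⟨s, hs, hμ⟩ := Finset.mem_biUnion.1 (support_sum hμ)
      rw [support_monomial] at hμ
      split_ifs at hμ with hc
      · exact absurd hμ (Finset.notMem_empty μ)
      rw [Finset.mem_singleton] at hμ
      subst hμ
      refine ⟨le_of_eq (aux_pair_sum _ _), fun j => by simp [Finsupp.single_apply], ?_⟩
      intro t ht
      simp only [Finsupp.add_apply, Finsupp.single_apply] at ht
      rcases eq_or_ne t s with rfl | h1
      · exact le_trans (le_totalDegree hs) (hp0 i)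
      rcases eq_or_ne t (mi i) with rfl | h2
      · exact hdmi' i
      · exfalso
        apply ht
        rw [if_neg fun h => h1 (Sum.inl.inj h).symm, if_neg fun h => h2 (Sum.inl.inj h).symm]
        rfl
    · -- input part
      obtain ⟨j, -, hμ⟩ := Finset.mem_biUnion.1 (support_sum hμ)
      obtain ⟨s, hs, hμ⟩ := Finset.mem_biUnion.1 (support_sum hμ)
      rw [support_monomial] at hμ
      split_ifs at hμ with hc
      · exact absurd hμ (Finset.notMem_empty μ)
      rw [Finset.mem_singleton] at hμ
      subst hμ
      have hmi0 : m i ≠ 0 := by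
        intro h0
        exact hc (by rw [h0]; simp)
      have hsdeg : (s.sum fun _ e => e) ≤ 1 := le_trans (le_totalDegree hs) (hp j i)
      refine ⟨le_of_eq (aux_pair_sum _ _), ?_, ?_⟩
      · intro j'
        simp [Finsupp.single_apply, Finsupp.add_apply]
        split_ifs <;> simp
      · intro t ht
        simp only [Finsupp.add_apply, Finsupp.single_apply] at ht
        rcases eq_or_ne t (s + mi i) with rfl | h2
        · have : ((s + mi i).sum fun _ e => e) = (s.sum fun _ e => e) + ((mi i).sum fun _ e => e) := by
            rw [Finsupp.sum_add_index' (fun _ => rfl) (fun _ _ _ => rfl)]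
          have := hdmi i hmi0
          omega
        · exfalso
          apply ht
          rw [if_neg Sum.inr_ne_inl, if_neg fun h => h2 (Sum.inl.inj h).symm]
          rfl
  refine ⟨q, ?_, ?_, ?_, ?_⟩
  · exact Finset.sup_le fun μ hμ => (key μ hμ).1
  · exact fun j => degreeOf_le_iff.2 fun μ hμ => (key μ hμ).2.1 j
  · intro s hs
    obtain ⟨μ, hμ, hsμ⟩ := (mem_vars _).1 hs
    exact (key μ hμ).2.2 s (Finsupp.mem_support_iff.1 hsμ)
  · -- the evaluation identity
    have hpd : ∀ i : Fin n,
        (rename (Sum.inl : Fin n → Fin n ⊕ Fin r)) (pderiv i (monomial m (1 : ℂ)))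
          = C (m i : ℂ) * rename Sum.inl (monomial (mi i) (1 : ℂ)) := by
      intro i
      rw [pderiv_monomial, one_mul,
        show (monomial (m - Finsupp.single i 1)) ((m i : ℕ) : ℂ)
          = C ((m i : ℕ) : ℂ) * monomial (mi i) (1 : ℂ) by rw [C_mul_monomial, mul_one, hmi],
        map_mul, rename_C]
    have hmul : ∀ s t : Fin n →₀ ℕ,
        (rename (Sum.inl : Fin n → Fin n ⊕ Fin r)) (monomial (s + t) (1 : ℂ))
          = rename Sum.inl (monomial s (1 : ℂ)) * rename Sum.inl (monomial t (1 : ℂ)) := by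
      intro s t
      rw [← map_mul, monomial_mul, mul_one]
    rw [hq, map_sum]
    refine Finset.sum_congr rfl fun i _ => ?_
    rw [map_add, map_sum, map_sum]
    simp only [map_sum, aux_aeval_pair, Sum.elim_inl, Sum.elim_inr]
    rw [hpd i, aux_rename_sum Sum.inl (p0 i)]
    have hB : ∀ j : Fin r, (rename (Sum.inl : Fin n → Fin n ⊕ Fin r)) (p j i)
        = ∑ s ∈ (p j i).support, C (coeff s (p j i)) * rename Sum.inl (monomial s (1:ℂ)) :=
      fun j => aux_rename_sum Sum.inl (p j i)
    simp only [hB]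
    rw [add_mul, Finset.sum_mul, Finset.sum_mul]
    congr 1
    · refine Finset.sum_congr rfl fun s _ => ?_
      rw [map_mul (C : ℂ →+* _)]
      ring
    · refine Finset.sum_congr rfl fun j _ => ?_
      rw [Finset.mul_sum, Finset.sum_mul]
      refine Finset.sum_congr rfl fun s _ => ?_
      rw [hmul, map_mul (C : ℂ →+* _)]
      ring
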